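/- Under the setup of a {0,1}-valued mask m, poisoned points x' = (1-m)⊙x + m⊙t and x'ᵢ = (1-m)⊙xᵢ + m⊙t sharing the same trigger t, and RBF kernel K(u,v) = exp(-2γ‖u-v‖²) with γ > 0: if m⊙(t - xᵢ) ≠ 0, then K(x', x'ᵢ) > K(x', xᵢ). -/

import Mathlib

noncomputable def had {d : ℕ} (u v : EuclideanSpace ℝ (Fin d)) :
    EuclideanSpace ℝ (Fin d) := WithLp.toLp 2 (fun j => u j * v j)

noncomputable def onesVec (d : ℕ) : EuclideanSpace ℝ (Fin d) := WithLp.toLp 2 (fun _ => 1)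

theorem kernel_poisoned_gt_benign (d : ℕ) (hd : 0 < d) (γ : ℝ) (hγ : 0 < γ)
    (x xi t m : EuclideanSpace ℝ (Fin d))
    (hm : ∀ j, m j = 0 ∨ m j = 1)
    (hδ : had m (t - xi) ≠ 0) :
    Real.exp (-2 * γ * ‖(had (onesVec d - m) x + had m t) -
        (had (onesVec d - m) xi + had m t)‖ ^ 2) >
      Real.exp (-2 * γ * ‖(had (onesVec d - m) x + had m t) - xi‖ ^ 2) := by
  set a : EuclideanSpace ℝ (Fin d) := had (onesVec d - m) (x - xi) with ha
  set c : EuclideanSpace ℝ (Fin d) := had m (t - xi) with hc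
  have h1 : (had (onesVec d - m) x + had m t) -
      (had (onesVec d - m) xi + had m t) = a := by
    ext j
    simp [ha, had, onesVec]
    ring
  have h2 : (had (onesVec d - m) x + had m t) - xi = a + c := by
    ext j
    simp [ha, hc, had, onesVec]
    ring
  have horth : (inner ℝ a c : ℝ) = 0 := by
    rw [PiLp.inner_apply]
    apply Finset.sum_eq_zero
    intro j _
    rcases hm j with h | h <;>
      simp [ha, hc, had, onesVec, h]
  have hnorm : ‖a + c‖ ^ 2 = ‖a‖ ^ 2 + ‖c‖ ^ 2 := by
    rw [norm_add_sq_real, horth]; ring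
  have hcpos : 0 < ‖c‖ ^ 2 := by
    have : ‖c‖ ≠ 0 := norm_ne_zero_iff.mpr hδ
    positivity
  rw [h1, h2, hnorm]
  apply Real.exp_lt_exp.mpr
  nlinarith [hγ]
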